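/- Let G be a finite simple connected bipartite graph with at least 4 vertices such that G remains connected after the deletion of any single vertex (G is 2-connected). Let u and v be two distinct non-adjacent vertices lying in the same partite set of G, and let G + e be the graph obtained by adding the edge e = uv. Then G + e is not strongly EFX-orientable. -/

import Mathlib

open SimpleGraph
open scoped Classical

variable {V : Type*}

def bundleSet (G : SimpleGraph V) (head : Sym2 V → V) (v : V) : Set (Sym2 V) :=
  {e ∈ G.edgeSet | head e = v}

def IsEFXOrientation (G : SimpleGraph V) (f : V → Set (Sym2 V) → NNReal)
    (head : Sym2 V → V) : Prop :=
  (∀ e ∈ G.edgeSet, head e ∈ e) ∧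
  ∀ a b : V, ∀ g ∈ bundleSet G head b,
    f a (bundleSet G head b \ {g}) ≤ f a (bundleSet G head a)

def StronglyEFXOrientable [Fintype V] (G : SimpleGraph V) : Prop :=
  ∀ f : V → Set (Sym2 V) → NNReal,
    (∀ a, Monotone (f a)) →
    (∀ a X, f a X = f a (X ∩ G.incidenceSet a)) →
    ∃ head : Sym2 V → V, IsEFXOrientation G f head

noncomputable def bundle [Fintype V] (G : SimpleGraph V) (head : Sym2 V → V) (v : V) :
    Finset (Sym2 V) :=
  Finset.univ.filter fun e => e ∈ G.edgeSet ∧ head e = v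

def IsEFX01Orientation [Fintype V] (G : SimpleGraph V) (w : V → Sym2 V → ℕ)
    (head : Sym2 V → V) : Prop :=
  (∀ e ∈ G.edgeSet, head e ∈ e) ∧
  ∀ a b : V, ∀ g ∈ bundle G head b,
    ∑ e ∈ (bundle G head b).erase g, w a e ≤ ∑ e ∈ bundle G head a, w a e

def ZeroOneStronglyEFXOrientable [Fintype V] (G : SimpleGraph V) : Prop :=
  ∀ w : V → Sym2 V → ℕ, (∀ a e, w a e ≤ 1) → (∀ a e, a ∉ e → w a e = 0) →
    ∃ head : Sym2 V → V, IsEFX01Orientation G w head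

def IndepOn (G : SimpleGraph V) (s : Set V) : Prop :=
  ∀ a ∈ s, ∀ b ∈ s, ¬ G.Adj a b

/-- max-style valuation induced by integer weights -/
noncomputable def valOf (w : V → Sym2 V → ℕ) (x : V) (X : Set (Sym2 V)) : NNReal :=
  sSup (insert 0 ((fun g => (w x g : NNReal)) '' X))

lemma valOf_bddAbove (w : V → Sym2 V → ℕ) (hw : ∀ x g, w x g ≤ 2) (x : V) (X : Set (Sym2 V)) :
    BddAbove (insert 0 ((fun g => (w x g : NNReal)) '' X)) := by
  refine ⟨2, ?_⟩
  rintro y (rfl | ⟨g, hg, rfl⟩)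
  · exact zero_le
  · exact_mod_cast Nat.cast_le.mpr (hw x g)

lemma le_valOf (w : V → Sym2 V → ℕ) (hw : ∀ x g, w x g ≤ 2) {x : V} {X : Set (Sym2 V)}
    {g : Sym2 V} (hg : g ∈ X) : (w x g : NNReal) ≤ valOf w x X :=
  le_csSup (valOf_bddAbove w hw x X) (Set.mem_insert_of_mem _ ⟨g, hg, rfl⟩)

lemma valOf_le (w : V → Sym2 V → ℕ) {x : V} {X : Set (Sym2 V)} {c : NNReal}
    (h : ∀ g ∈ X, (w x g : NNReal) ≤ c) : valOf w x X ≤ c := by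
  apply csSup_le (Set.insert_nonempty _ _)
  rintro y (rfl | ⟨g, hg, rfl⟩)
  · exact zero_le
  · exact h g hg

lemma valOf_mono (w : V → Sym2 V → ℕ) (hw : ∀ x g, w x g ≤ 2) (x : V) :
    Monotone (valOf w x) := by
  intro X Y hXY
  apply csSup_le_csSup (valOf_bddAbove w hw x Y) (Set.insert_nonempty _ _)
  rintro y (rfl | ⟨g, hg, rfl⟩)
  · exact Set.mem_insert _ _
  · exact Set.mem_insert_of_mem _ ⟨g, hXY hg, rfl⟩

lemma valOf_graphical (H : SimpleGraph V) (w : V → Sym2 V → ℕ) (hw : ∀ x g, w x g ≤ 2)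
    (hinc : ∀ x g, w x g ≠ 0 → g ∈ H.incidenceSet x) (x : V) (X : Set (Sym2 V)) :
    valOf w x X = valOf w x (X ∩ H.incidenceSet x) := by
  apply le_antisymm
  · apply valOf_le
    intro g hg
    by_cases h0 : w x g = 0
    · simp [h0]
    · exact le_valOf w hw ⟨hg, hinc x g h0⟩
  · exact valOf_mono w hw x (Set.inter_subset_left)

section Key

variable {H : SimpleGraph V} {w : V → Sym2 V → ℕ} {head : Sym2 V → V}

/-- key: if edge s(x,y) has head y and y's bundle isn't exactly {s(x,y)}, then x's
value for that edge is at most x's own bundle value -/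
lemma keyV1 (hw : ∀ x g, w x g ≤ 2)
    (hefx : IsEFXOrientation H (valOf w) head)
    {x y : V} (hxy : s(x,y) ∈ H.edgeSet) (hhd : head s(x,y) = y)
    (hne : bundleSet H head y ≠ {s(x,y)}) :
    (w x s(x,y) : NNReal) ≤ valOf w x (bundleSet H head x) := by
  have hmem : s(x,y) ∈ bundleSet H head y := ⟨hxy, hhd⟩
  have hex : ∃ g' ∈ bundleSet H head y, g' ≠ s(x,y) := by
    by_contra hc
    push_neg at hc
    exact hne (Set.eq_singleton_iff_unique_mem.mpr ⟨hmem, hc⟩)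
  obtain ⟨g', hg', hg'ne⟩ := hex
  have h1 : (w x s(x,y) : NNReal) ≤ valOf w x (bundleSet H head y \ {g'}) :=
    le_valOf w hw ⟨hmem, by simp [hg'ne.symm]⟩
  exact h1.trans (hefx.2 x y g' hg')

/-- key L2: a "strong" edge (dominant for the tail) fully occupies its head. -/
lemma keyL2 (hw : ∀ x g, w x g ≤ 2)
    (hefx : IsEFXOrientation H (valOf w) head)
    {x y : V} (hxy : s(x,y) ∈ H.edgeSet) (hhd : head s(x,y) = y)
    (hpos : 0 < w x s(x,y))
    (hdom : ∀ g ∈ bundleSet H head x, w x g < w x s(x,y)) :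
    bundleSet H head y = {s(x,y)} := by
  by_contra hne
  have h1 := keyV1 hw hefx hxy hhd hne
  have h2 : valOf w x (bundleSet H head x) ≤ ((w x s(x,y) - 1 : ℕ) : NNReal) := by
    apply valOf_le
    intro g hg
    exact_mod_cast Nat.cast_le.mpr (Nat.le_sub_one_of_lt (hdom g hg))
  have h3 : ((w x s(x,y) - 1 : ℕ) : NNReal) < (w x s(x,y) : NNReal) := by
    exact_mod_cast Nat.sub_lt hpos one_pos
  exact absurd (h1.trans h2) (not_le.mpr h3)


end Key

-- real content begins
/-- the designated ("matched") edge of the i-th vertex along an alternating path -/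
def sigE (c : ℕ → V) (i : ℕ) : Sym2 V :=
  if i % 2 = 1 then s(c i, c (i+1)) else s(c (i-1), c i)

lemma sigE_odd (c : ℕ → V) {i : ℕ} (h : i % 2 = 1) : sigE c i = s(c i, c (i+1)) :=
  if_pos h
lemma sigE_even (c : ℕ → V) {i : ℕ} (h : i % 2 = 0) : sigE c i = s(c (i-1), c i) := by
  rw [sigE, if_neg (by omega)]

lemma mem_bundleSet {G : SimpleGraph V} {head : Sym2 V → V} {x : V} {g : Sym2 V} :
    g ∈ bundleSet G head x ↔ g ∈ G.edgeSet ∧ head g = x := Iff.rfl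

section Leg
variable {H : SimpleGraph V} {w : V → Sym2 V → ℕ} {head : Sym2 V → V}
variable {c : ℕ → V} {n : ℕ}

/-- propagation along an alternating path -/
lemma leg (hw : ∀ x g, w x g ≤ 2)
    (hefx : IsEFXOrientation H (valOf w) head)
    (hn : 1 ≤ n)
    (hcAdj : ∀ i < 2*n, H.Adj (c i) (c (i+1)))
    (hcInj : ∀ i ≤ 2*n, ∀ j ≤ 2*n, c i = c j → i = j)
    (hwv : ∀ i, 0 < i → i ≤ 2*n → 1 ≤ w (c i) (sigE c i))
    (hdom : ∀ i, 0 < i → i ≤ 2*n → ∀ g, g ≠ sigE c i → w (c i) g < w (c i) (sigE c i))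
    (hstart : s(c 0, c 1) ∉ bundleSet H head (c 0)) :
    bundleSet H head (c (2*n)) = {s(c (2*n - 1), c (2*n))} := by
  have hne : ∀ i ≤ 2*n, ∀ j ≤ 2*n, i ≠ j → c i ≠ c j := by
    intro i hi j hj hij hc; exact hij (hcInj i hi j hj hc)
  -- step1: if some g0 ∈ X (c k), g0 ≠ sigE c k, k odd in range, then X (c (k+1)) = {s(c k, c (k+1))}
  have step1 : ∀ k, k % 2 = 1 → k < 2*n → ∀ g0 ∈ bundleSet H head (c k), g0 ≠ sigE c k →
      bundleSet H head (c (k+1)) = {s(c k, c (k+1))} := by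
    intro k hk hklt g0 hg0 hg0ne
    have hadj : H.Adj (c k) (c (k+1)) := hcAdj k hklt
    have hedge : s(c k, c (k+1)) ∈ H.edgeSet := hadj
    have hsig : sigE c k = s(c k, c (k+1)) := sigE_odd c hk
    have hsig' : sigE c (k+1) = s(c k, c (k+1)) := by
      rw [sigE_even c (by omega)]; simp
    have hhd := hefx.1 _ hedge
    rw [Sym2.mem_iff] at hhd
    rcases hhd with h | h
    · -- head = c k : contradiction, since then X (c k) = {s(c k, c (k+1))} ∌ g0
      exfalso
      have hxy : s(c (k+1), c k) ∈ H.edgeSet := by rwa [Sym2.eq_swap]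
      have hhd2 : head s(c (k+1), c k) = c k := by rwa [Sym2.eq_swap]
      have hX : bundleSet H head (c k) = {s(c (k+1), c k)} := by
        apply keyL2 hw hefx hxy hhd2
        · rw [Sym2.eq_swap, ← hsig']
          exact hwv (k+1) (by omega) (by omega)
        · intro g hg
          have hgne : g ≠ s(c (k+1), c k) := by
            rintro rfl
            rw [mem_bundleSet] at hg
            have h2 := hg.2
            rw [Sym2.eq_swap] at h2
            rw [h] at h2
            exact hne k (by omega) (k+1) (by omega) (by omega) h2
          rw [Sym2.eq_swap, ← hsig']
          exact hdom (k+1) (by omega) (by omega) g (by rwa [hsig', ← Sym2.eq_swap])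
      rw [hX] at hg0
      simp only [Set.mem_singleton_iff] at hg0
      rw [← Sym2.eq_swap, ← hsig] at hg0
      exact hg0ne hg0
    · -- head = c (k+1): good, apply keyL2 with tail c k
      apply keyL2 hw hefx hedge h
      · rw [← hsig]; exact hwv k (by omega) (by omega)
      · intro g hg
        have hgne : g ≠ s(c k, c (k+1)) := by
          rintro rfl
          rw [mem_bundleSet] at hg
          rw [h] at hg
          exact hne (k+1) (by omega) k (by omega) (by omega) hg.2
        rw [← hsig]
        exact hdom k (by omega) (by omega) g (by rwa [hsig])
  -- step2: from X (c k) = {s(c (k-1), c k)} (k even, 2 ≤ k ≤ 2n-2) get the hypotheses of step1 at k+1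
  have step2 : ∀ k, k % 2 = 0 → 2 ≤ k → k + 2 ≤ 2*n →
      bundleSet H head (c k) = {s(c (k-1), c k)} →
      s(c k, c (k+1)) ∈ bundleSet H head (c (k+1)) ∧ s(c k, c (k+1)) ≠ sigE c (k+1) := by
    intro k hk hk2 hkle hX
    have hadj : H.Adj (c k) (c (k+1)) := hcAdj k (by omega)
    have hedge : s(c k, c (k+1)) ∈ H.edgeSet := hadj
    have hhd := hefx.1 _ hedge
    rw [Sym2.mem_iff] at hhd
    have hne1 : s(c k, c (k+1)) ≠ s(c (k-1), c k) := by
      intro h'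
      rw [Sym2.eq_iff] at h'
      rcases h' with ⟨h1, h2⟩ | ⟨h1, h2⟩
      · exact hne k (by omega) (k-1) (by omega) (by omega) h1
      · exact hne (k+1) (by omega) (k-1) (by omega) (by omega) h2
    have hhd2 : head s(c k, c (k+1)) = c (k+1) := by
      rcases hhd with h | h
      · exfalso
        have : s(c k, c (k+1)) ∈ bundleSet H head (c k) := ⟨hedge, h⟩
        rw [hX] at this
        exact hne1 this
      · exact h
    refine ⟨⟨hedge, hhd2⟩, ?_⟩
    have hsig : sigE c (k+1) = s(c (k+1), c (k+2)) := by
      rw [sigE_odd c (by omega)]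
    rw [hsig]
    intro h'
    rw [Sym2.eq_iff] at h'
    rcases h' with ⟨h1, h2⟩ | ⟨h1, h2⟩
    · exact hne k (by omega) (k+1) (by omega) (by omega) h1
    · exact hne k (by omega) (k+2) (by omega) (by omega) h1
  -- main induction
  have T : ∀ j, j < n → bundleSet H head (c (2*j+2)) = {s(c (2*j+1), c (2*j+2))} := by
    intro j
    induction j with
    | zero =>
      intro _
      have hadj0 : H.Adj (c 0) (c 1) := hcAdj 0 (by omega)
      have hedge0 : s(c 0, c 1) ∈ H.edgeSet := hadj0
      have hhd0 := hefx.1 _ hedge0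
      rw [Sym2.mem_iff] at hhd0
      have hhd1 : head s(c 0, c 1) = c 1 := by
        rcases hhd0 with h | h
        · exact absurd ⟨hedge0, h⟩ hstart
        · exact h
      have hstep := step1 1 (by omega) (by omega) s(c 0, c 1) ⟨hedge0, hhd1⟩ ?_
      · simpa using hstep
      · rw [sigE_odd c (by omega)]
        intro h'
        rw [Sym2.eq_iff] at h'
        rcases h' with ⟨h1, h2⟩ | ⟨h1, h2⟩
        · exact hne 0 (by omega) 1 (by omega) (by omega) h1
        · exact hne 0 (by omega) 2 (by omega) (by omega) h1
    | succ j ih =>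
      intro hj
      have hprev := ih (by omega)
      obtain ⟨h2a, h2b⟩ := step2 (2*j+2) (by omega) (by omega) (by omega) hprev
      rw [show 2*j+2+1 = 2*j+3 from by omega] at h2a h2b
      have hstep := step1 (2*j+3) (by omega) (by omega) s(c (2*j+2), c (2*j+3)) h2a h2b
      rw [show 2*j+3+1 = 2*(j+1)+2 from by omega] at hstep
      rw [show 2*j+3 = 2*(j+1)+1 from by omega] at hstep
      exact hstep
  have hT := T (n-1) (by omega)
  rw [show 2*(n-1)+1 = 2*n-1 from by omega] at hT
  rw [show 2*(n-1)+2 = 2*n from by omega] at hT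
  exact hT

end Leg

-- ============== real content ==============
noncomputable def wgt (u v : V) (r s : ℕ) (a b : ℕ → V) : V → Sym2 V → ℕ := fun x g =>
  if x = u then (if g = sigE a (2*r) then 2 else if g = s(u,v) then 1 else 0)
  else if x = v then (if g = sigE b (2*s) then 2 else if g = s(u,v) then 1 else 0)
  else if h : ∃ i, 0 < i ∧ i < 2*r ∧ a i = x then (if g = sigE a h.choose then 1 else 0)
  else if h : ∃ j, 0 < j ∧ j < 2*s ∧ b j = x then (if g = sigE b h.choose then 1 else 0)
  else 0

set_option linter.unusedSectionVars false
section Gadget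
variable {H : SimpleGraph V} {u v : V} {r s : ℕ} {a b : ℕ → V}
variable (hne : u ≠ v) (hH : H.Adj u v) (hr : 1 ≤ r) (hs : 1 ≤ s)
variable (ha0 : a 0 = v) (haE : a (2*r) = u) (hb0 : b 0 = u) (hbE : b (2*s) = v)
variable (haAdj : ∀ i < 2*r, H.Adj (a i) (a (i+1))) (hbAdj : ∀ j < 2*s, H.Adj (b j) (b (j+1)))
variable (haInj : ∀ i ≤ 2*r, ∀ j ≤ 2*r, a i = a j → i = j)
variable (hbInj : ∀ i ≤ 2*s, ∀ j ≤ 2*s, b i = b j → i = j)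
variable (hab : ∀ i, 0 < i → i < 2*r → ∀ j, 0 < j → j < 2*s → a i ≠ b j)

lemma wgt_le : ∀ x g, wgt u v r s a b x g ≤ 2 := by
  intro x g
  unfold wgt
  split_ifs <;> omega

include hne in
lemma wgt_u : ∀ g, wgt u v r s a b u g =
    if g = sigE a (2*r) then 2 else if g = s(u,v) then 1 else 0 := by
  intro g; unfold wgt; rw [if_pos rfl]

include hne in
lemma wgt_v : ∀ g, wgt u v r s a b v g =
    if g = sigE b (2*s) then 2 else if g = s(u,v) then 1 else 0 := by
  intro g; unfold wgt; rw [if_neg (Ne.symm hne), if_pos rfl]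

include hne haE ha0 haInj hr in
lemma wgt_a {i : ℕ} (h1 : 0 < i) (h2 : i < 2*r) : ∀ g, wgt u v r s a b (a i) g =
    if g = sigE a i then 1 else 0 := by
  intro g
  have hau : a i ≠ u := by
    rw [← haE]; intro hc
    have := haInj i (by omega) (2*r) (by omega) hc; omega
  have hav : a i ≠ v := by
    rw [← ha0]; intro hc
    have := haInj i (by omega) 0 (by omega) hc; omega
  have hx : ∃ i', 0 < i' ∧ i' < 2*r ∧ a i' = a i := ⟨i, h1, h2, rfl⟩
  unfold wgt
  rw [if_neg hau, if_neg hav, dif_pos hx]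
  have hc : hx.choose = i := by
    obtain ⟨hc1, hc2, hc3⟩ := hx.choose_spec
    exact haInj _ (by omega) i (by omega) hc3
  rw [hc]

include hne hbE hb0 hbInj hs hab in
lemma wgt_b {j : ℕ} (h1 : 0 < j) (h2 : j < 2*s) : ∀ g, wgt u v r s a b (b j) g =
    if g = sigE b j then 1 else 0 := by
  intro g
  have hbu : b j ≠ u := by
    rw [← hb0]; intro hc
    have := hbInj j (by omega) 0 (by omega) hc; omega
  have hbv : b j ≠ v := by
    rw [← hbE]; intro hc
    have := hbInj j (by omega) (2*s) (by omega) hc; omega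
  have hna : ¬ ∃ i, 0 < i ∧ i < 2*r ∧ a i = b j := by
    rintro ⟨i, hi1, hi2, heq⟩
    exact hab i hi1 hi2 j h1 h2 heq
  have hx : ∃ j', 0 < j' ∧ j' < 2*s ∧ b j' = b j := ⟨j, h1, h2, rfl⟩
  unfold wgt
  rw [if_neg hbu, if_neg hbv, dif_neg hna, dif_pos hx]
  have hc : hx.choose = j := by
    obtain ⟨hc1, hc2, hc3⟩ := hx.choose_spec
    exact hbInj _ (by omega) j (by omega) hc3
  rw [hc]

include hne hH hr hs ha0 haE hb0 hbE haAdj hbAdj haInj hbInj hab in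
lemma wgt_inc : ∀ x g, wgt u v r s a b x g ≠ 0 → g ∈ H.incidenceSet x := by
  intro x g hg
  have hedgeA : ∀ i < 2*r, s(a i, a (i+1)) ∈ H.edgeSet := fun i hi => haAdj i hi
  have hedgeB : ∀ j < 2*s, s(b j, b (j+1)) ∈ H.edgeSet := fun j hj => hbAdj j hj
  have hsigA : ∀ i, 0 < i → i ≤ 2*r → sigE a i ∈ H.edgeSet ∧ a i ∈ sigE a i := by
    intro i hi1 hi2
    rcases Nat.even_or_odd i with he | ho
    · rw [sigE_even a (Nat.even_iff.mp he)]
      constructor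
      · have := hedgeA (i-1) (by omega)
        rwa [show i - 1 + 1 = i from by omega] at this
      · simp
    · have hoi := Nat.odd_iff.mp ho
      rw [sigE_odd a hoi]
      exact ⟨hedgeA i (by omega), by simp⟩
  have hsigB : ∀ j, 0 < j → j ≤ 2*s → sigE b j ∈ H.edgeSet ∧ b j ∈ sigE b j := by
    intro j hj1 hj2
    rcases Nat.even_or_odd j with he | ho
    · rw [sigE_even b (Nat.even_iff.mp he)]
      constructor
      · have := hedgeB (j-1) (by omega)
        rwa [show j - 1 + 1 = j from by omega] at this
      · simp
    · have hoi := Nat.odd_iff.mp ho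
      rw [sigE_odd b hoi]
      exact ⟨hedgeB j (by omega), by simp⟩
  unfold wgt at hg
  split_ifs at hg with h1 h2 h3 h4 h5 h6 h7 h8
  -- x = u cases
  · subst h1
    rw [h2]
    have := hsigA (2*r) (by omega) le_rfl
    rw [haE] at this
    exact ⟨this.1, this.2⟩
  · subst h1; rw [h3]
    exact ⟨hH, by simp⟩
  · exact absurd rfl hg
  -- x = v cases
  · subst h4
    rw [h5]
    have := hsigB (2*s) (by omega) le_rfl
    rw [hbE] at this
    exact ⟨this.1, this.2⟩
  · subst h4; rw [h6]
    exact ⟨hH, by simp⟩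
  · exact absurd rfl hg
  -- a-internal case
  · obtain ⟨hc1, hc2, hc3⟩ := h7.choose_spec
    rw [h8]
    have hh := hsigA h7.choose (by omega) (by omega)
    have hh2 := hh.2
    rw [hc3] at hh2
    exact ⟨hh.1, hh2⟩
  · exact absurd rfl hg
  -- b-internal case
  · next h9 h10 =>
    obtain ⟨hc1, hc2, hc3⟩ := h9.choose_spec
    rw [h10]
    have hh := hsigB h9.choose (by omega) (by omega)
    have hh2 := hh.2
    rw [hc3] at hh2
    exact ⟨hh.1, hh2⟩
  · exact absurd rfl hg
  · exact absurd rfl hg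

include hne hH hr hs ha0 haE hb0 hbE haAdj hbAdj haInj hbInj hab in
theorem gadget [Fintype V] : ¬ StronglyEFXOrientable H := by
  intro hS
  set w : V → Sym2 V → ℕ := wgt u v r s a b with hwdef
  have hw : ∀ x g, w x g ≤ 2 := wgt_le
  have hinc : ∀ x g, w x g ≠ 0 → g ∈ H.incidenceSet x :=
    wgt_inc hne hH hr hs ha0 haE hb0 hbE haAdj hbAdj haInj hbInj hab
  obtain ⟨head, hefx⟩ := hS (valOf w) (fun x => valOf_mono w hw x)
    (fun x X => valOf_graphical H w hw hinc x X)
  -- basic vertex distinctness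
  have hAv : ∀ i ≤ 2*r, ∀ j ≤ 2*r, i ≠ j → a i ≠ a j :=
    fun i hi j hj hij hc => hij (haInj i hi j hj hc)
  have hBv : ∀ i ≤ 2*s, ∀ j ≤ 2*s, i ≠ j → b i ≠ b j :=
    fun i hi j hj hij hc => hij (hbInj i hi j hj hc)
  -- sigE normal forms at the endpoints
  have hsaE : sigE a (2*r) = s(a (2*r - 1), a (2*r)) := sigE_even a (by omega)
  have hsbE : sigE b (2*s) = s(b (2*s - 1), b (2*s)) := sigE_even b (by omega)
  -- the added edge
  have heedge : s(u,v) ∈ H.edgeSet := hH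
  -- key sym2 distinctness facts
  have f1 : s(u,v) ≠ sigE a (2*r) := by
    rw [hsaE]
    intro h
    rw [Sym2.eq_iff] at h
    rcases h with ⟨h1, h2⟩ | ⟨h1, h2⟩
    · rw [haE] at h2; exact hne h2.symm
    · rw [← ha0] at h2
      exact hAv (2*r-1) (by omega) 0 (by omega) (by omega) h2.symm
  have f2 : s(u,v) ≠ sigE b (2*s) := by
    rw [hsbE]
    intro h
    rw [Sym2.eq_iff] at h
    rcases h with ⟨h1, h2⟩ | ⟨h1, h2⟩
    · rw [← hb0] at h1
      exact hBv 0 (by omega) (2*s-1) (by omega) (by omega) h1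
    · rw [hbE] at h1; exact hne h1
  have f3 : s(b 0, b 1) ≠ sigE a (2*r) := by
    rw [hsaE]
    intro h
    rw [Sym2.eq_iff] at h
    rcases h with ⟨h1, h2⟩ | ⟨h1, h2⟩
    · rw [hb0, ← haE] at h1
      exact hAv (2*r) (by omega) (2*r-1) (by omega) (by omega) h1
    · exact hab (2*r-1) (by omega) (by omega) 1 (by omega) (by omega) h2.symm
  have f4 : s(b 0, b 1) ≠ s(u,v) := by
    intro h
    rw [Sym2.eq_iff] at h
    rcases h with ⟨h1, h2⟩ | ⟨h1, h2⟩
    · rw [← hbE] at h2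
      exact hBv 1 (by omega) (2*s) (by omega) (by omega) h2
    · rw [hb0] at h1; exact hne h1
  have f5 : s(a 0, a 1) ≠ s(u,v) := by
    intro h
    rw [Sym2.eq_iff] at h
    rcases h with ⟨h1, h2⟩ | ⟨h1, h2⟩
    · rw [ha0] at h1; exact hne h1.symm
    · rw [← haE] at h2
      exact hAv 1 (by omega) (2*r) (by omega) (by omega) h2
  have f6 : s(a 0, a 1) ≠ sigE b (2*s) := by
    rw [hsbE]
    intro h
    rw [Sym2.eq_iff] at h
    rcases h with ⟨h1, h2⟩ | ⟨h1, h2⟩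
    · rw [ha0, ← hbE] at h1
      exact hBv (2*s) (by omega) (2*s-1) (by omega) (by omega) h1
    · exact hab 1 (by omega) (by omega) (2*s-1) (by omega) (by omega) h2
  -- weight values
  have hwu : ∀ g, w u g = if g = sigE a (2*r) then 2 else if g = s(u,v) then 1 else 0 :=
    wgt_u hne
  have hwv' : ∀ g, w v g = if g = sigE b (2*s) then 2 else if g = s(u,v) then 1 else 0 :=
    wgt_v hne
  have hwa : ∀ i, 0 < i → i < 2*r → ∀ g, w (a i) g = if g = sigE a i then 1 else 0 :=
    fun i h1 h2 => wgt_a hne hr ha0 haE haInj h1 h2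
  have hwb : ∀ j, 0 < j → j < 2*s → ∀ g, w (b j) g = if g = sigE b j then 1 else 0 :=
    fun j h1 h2 => wgt_b hne hs hb0 hbE hbInj hab h1 h2
  -- leg hypotheses for a
  have hwvA : ∀ i, 0 < i → i ≤ 2*r → 1 ≤ w (a i) (sigE a i) := by
    intro i h1 h2
    rcases eq_or_lt_of_le h2 with rfl | hlt
    · rw [haE, hwu, if_pos rfl]; omega
    · rw [hwa i h1 hlt, if_pos rfl]
  have hdomA : ∀ i, 0 < i → i ≤ 2*r → ∀ g, g ≠ sigE a i →
      w (a i) g < w (a i) (sigE a i) := by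
    intro i h1 h2 g hg
    rcases eq_or_lt_of_le h2 with rfl | hlt
    · rw [haE, hwu, hwu, if_pos rfl, if_neg hg]
      split_ifs <;> omega
    · rw [hwa i h1 hlt, hwa i h1 hlt, if_pos rfl, if_neg hg]; omega
  have hwvB : ∀ j, 0 < j → j ≤ 2*s → 1 ≤ w (b j) (sigE b j) := by
    intro j h1 h2
    rcases eq_or_lt_of_le h2 with rfl | hlt
    · rw [hbE, hwv', if_pos rfl]; omega
    · rw [hwb j h1 hlt, if_pos rfl]
  have hdomB : ∀ j, 0 < j → j ≤ 2*s → ∀ g, g ≠ sigE b j →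
      w (b j) g < w (b j) (sigE b j) := by
    intro j h1 h2 g hg
    rcases eq_or_lt_of_le h2 with rfl | hlt
    · rw [hbE, hwv', hwv', if_pos rfl, if_neg hg]
      split_ifs <;> omega
    · rw [hwb j h1 hlt, hwb j h1 hlt, if_pos rfl, if_neg hg]; omega
  -- the two legs
  have legA : s(a 0, a 1) ∉ bundleSet H head (a 0) →
      bundleSet H head u = {s(a (2*r - 1), a (2*r))} := by
    intro hstart
    rw [show bundleSet H head u = bundleSet H head (a (2*r)) from by rw [haE]]
    exact leg hw hefx hr haAdj haInj hwvA hdomA hstart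
  have legB : s(b 0, b 1) ∉ bundleSet H head (b 0) →
      bundleSet H head v = {s(b (2*s - 1), b (2*s))} := by
    intro hstart
    rw [show bundleSet H head v = bundleSet H head (b (2*s)) from by rw [hbE]]
    exact leg hw hefx hs hbAdj hbInj hwvB hdomB hstart
  -- occupancy forcing at the endpoints: if u holds its matched edge, its bundle is exactly it
  have occA : sigE a (2*r) ∈ bundleSet H head u → bundleSet H head u = {s(a (2*r-1), a (2*r))} := by
    intro hmem
    rw [hsaE] at hmem
    have hadj : H.Adj (a (2*r - 1)) (a (2*r)) := by
      have := haAdj (2*r-1) (by omega)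
      rwa [show 2*r - 1 + 1 = 2*r from by omega] at this
    have hhd : head s(a (2*r-1), a (2*r)) = a (2*r) := hmem.2.trans haE.symm
    have hX := keyL2 hw hefx (hadj : s(a (2*r-1), a (2*r)) ∈ H.edgeSet) hhd ?hpos ?hdom
    · rw [show bundleSet H head u = bundleSet H head (a (2*r)) from by rw [haE]]
      exact hX
    case hpos =>
      have hsig : sigE a (2*r-1) = s(a (2*r-1), a (2*r)) := by
        rw [sigE_odd a (by omega), show 2*r - 1 + 1 = 2*r from by omega]
      rw [← hsig]
      exact hwvA (2*r-1) (by omega) (by omega)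
    case hdom =>
      intro g hg
      have hsig : sigE a (2*r-1) = s(a (2*r-1), a (2*r)) := by
        rw [sigE_odd a (by omega), show 2*r - 1 + 1 = 2*r from by omega]
      rw [← hsig]
      apply hdomA (2*r-1) (by omega) (by omega)
      intro hc
      rw [hc, hsig] at hg
      have h2 := hg.2
      rw [hhd] at h2
      exact hAv (2*r) (by omega) (2*r-1) (by omega) (by omega) h2
  have occB : sigE b (2*s) ∈ bundleSet H head v → bundleSet H head v = {s(b (2*s-1), b (2*s))} := by
    intro hmem
    rw [hsbE] at hmem
    have hadj : H.Adj (b (2*s - 1)) (b (2*s)) := by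
      have := hbAdj (2*s-1) (by omega)
      rwa [show 2*s - 1 + 1 = 2*s from by omega] at this
    have hhd : head s(b (2*s-1), b (2*s)) = b (2*s) := hmem.2.trans hbE.symm
    have hX := keyL2 hw hefx (hadj : s(b (2*s-1), b (2*s)) ∈ H.edgeSet) hhd ?hpos ?hdom
    · rw [show bundleSet H head v = bundleSet H head (b (2*s)) from by rw [hbE]]
      exact hX
    case hpos =>
      have hsig : sigE b (2*s-1) = s(b (2*s-1), b (2*s)) := by
        rw [sigE_odd b (by omega), show 2*s - 1 + 1 = 2*s from by omega]
      rw [← hsig]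
      exact hwvB (2*s-1) (by omega) (by omega)
    case hdom =>
      intro g hg
      have hsig : sigE b (2*s-1) = s(b (2*s-1), b (2*s)) := by
        rw [sigE_odd b (by omega), show 2*s - 1 + 1 = 2*s from by omega]
      rw [← hsig]
      apply hdomB (2*s-1) (by omega) (by omega)
      intro hc
      rw [hc, hsig] at hg
      have h2 := hg.2
      rw [hhd] at h2
      exact hBv (2*s) (by omega) (2*s-1) (by omega) (by omega) h2
  -- start facts
  have hstartA : bundleSet H head v = {s(u,v)} ∨ bundleSet H head v = {s(b (2*s-1), b (2*s))} →
      s(a 0, a 1) ∉ bundleSet H head (a 0) := by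
    rintro (hXv | hXv) hmem <;>
      rw [show bundleSet H head (a 0) = bundleSet H head v from by rw [ha0], hXv] at hmem <;>
      simp only [Set.mem_singleton_iff] at hmem
    · exact f5 hmem
    · rw [← hsbE] at hmem; exact f6 hmem
  have hstartB : bundleSet H head u = {s(u,v)} ∨ bundleSet H head u = {s(a (2*r-1), a (2*r))} →
      s(b 0, b 1) ∉ bundleSet H head (b 0) := by
    rintro (hXu | hXu) hmem <;>
      rw [show bundleSet H head (b 0) = bundleSet H head u from by rw [hb0], hXu] at hmem <;>
      simp only [Set.mem_singleton_iff] at hmem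
    · exact f4 hmem
    · rw [← hsaE] at hmem; exact f3 hmem
  -- extraction helper
  have exV : ∀ x X, (1:NNReal) ≤ valOf w x X → ∃ g ∈ X, 1 ≤ w x g := by
    intro x X h
    by_contra hc
    push_neg at hc
    have hle : valOf w x X ≤ 0 := by
      apply valOf_le
      intro g hg
      have := hc g hg
      have h0 : w x g = 0 := by omega
      simp [h0]
    have : (1:NNReal) ≤ 0 := h.trans hle
    norm_num at this
  -- main case analysis on the head of the added edge
  have hhd := hefx.1 _ heedge
  rw [Sym2.mem_iff] at hhd
  rcases hhd with hdu | hdv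
  · -- head e = u
    have heu : s(u,v) ∈ bundleSet H head u := ⟨heedge, hdu⟩
    have hXu2 : bundleSet H head u = {s(u,v)} ∨
        bundleSet H head u = {s(a (2*r-1), a (2*r))} := by
      by_cases hXu : bundleSet H head u = {s(u,v)}
      · exact Or.inl hXu
      · right
        have hxy : s(v,u) ∈ H.edgeSet := by rwa [Sym2.eq_swap]
        have hhd2 : head s(v,u) = u := by rwa [Sym2.eq_swap]
        have hne2 : bundleSet H head u ≠ {s(v,u)} := by rwa [Sym2.eq_swap]
        have h1 := keyV1 hw hefx hxy hhd2 hne2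
        have h1' : (1:NNReal) ≤ valOf w v (bundleSet H head v) := by
          refine le_trans ?_ h1
          rw [Sym2.eq_swap, hwv', if_neg f2, if_pos rfl]
          norm_num
        obtain ⟨g, hg, hg1⟩ := exV v _ h1'
        have hgv : g = sigE b (2*s) := by
          rw [hwv' g] at hg1
          split_ifs at hg1 with hh1 hh2
          · exact hh1
          · exfalso
            rw [hh2] at hg
            have h3 := hg.2
            rw [hdu] at h3
            exact hne h3
          · omega
        rw [hgv] at hg
        have hXv := occB hg
        have hsA := hstartA (Or.inr hXv)
        have hXu' := legA hsA
        exact hXu'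
    rcases hXu2 with hXu | hXu
    · -- X_u = {e}: chain b then a
      have hsB := hstartB (Or.inl hXu)
      have hXv := legB hsB
      have hsA := hstartA (Or.inr hXv)
      have hXu' := legA hsA
      rw [hXu'] at heu
      simp only [Set.mem_singleton_iff] at heu
      rw [← hsaE] at heu
      exact f1 heu
    · rw [hXu] at heu
      simp only [Set.mem_singleton_iff] at heu
      rw [← hsaE] at heu
      exact f1 heu
  · -- head e = v
    have hev : s(u,v) ∈ bundleSet H head v := ⟨heedge, hdv⟩
    have hXv2 : bundleSet H head v = {s(u,v)} ∨
        bundleSet H head u = {s(a (2*r-1), a (2*r))} := by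
      by_cases hXv : bundleSet H head v = {s(u,v)}
      · exact Or.inl hXv
      · right
        have h1 := keyV1 hw hefx heedge hdv hXv
        have h1' : (1:NNReal) ≤ valOf w u (bundleSet H head u) := by
          refine le_trans ?_ h1
          rw [hwu, if_neg f1, if_pos rfl]
          norm_num
        obtain ⟨g, hg, hg1⟩ := exV u _ h1'
        have hgu : g = sigE a (2*r) := by
          rw [hwu g] at hg1
          split_ifs at hg1 with hh1 hh2
          · exact hh1
          · exfalso
            rw [hh2] at hg
            have h3 := hg.2
            rw [hdv] at h3
            exact hne h3.symm
          · omega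
        rw [hgu] at hg
        exact occA hg
    rcases hXv2 with hXv | hXu
    · have hsA := hstartA (Or.inl hXv)
      have hXu' := legA hsA
      have hsB := hstartB (Or.inr hXu')
      have hXv' := legB hsB
      rw [hXv'] at hev
      simp only [Set.mem_singleton_iff] at hev
      rw [← hsbE] at hev
      exact f2 hev
    · have hsB := hstartB (Or.inr hXu)
      have hXv' := legB hsB
      rw [hXv'] at hev
      simp only [Set.mem_singleton_iff] at hev
      rw [← hsbE] at hev
      exact f2 hev

end Gadget

variable {G : SimpleGraph V}

-- (0) getVert membership and injectivity
lemma getVert_mem_support' {u v : V} (p : G.Walk u v) (i : ℕ) : p.getVert i ∈ p.support := by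
  rw [SimpleGraph.Walk.mem_support_iff_exists_getVert]
  by_cases h : i ≤ p.length
  · exact ⟨i, rfl, h⟩
  · exact ⟨p.length, by rw [SimpleGraph.Walk.getVert_length,
      p.getVert_of_length_le (le_of_not_ge h)], le_rfl⟩

lemma IsPath.getVert_inj' {u v : V} {p : G.Walk u v} (hp : p.IsPath) :
    ∀ i ≤ p.length, ∀ j ≤ p.length, p.getVert i = p.getVert j → i = j := by
  induction p with
  | nil => intro i hi j hj _; simp at hi hj; omega
  | cons h q ih =>
    intro i hi j hj hij
    have hq := (SimpleGraph.Walk.cons_isPath_iff _ _).mp hp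
    match i, j with
    | 0, 0 => rfl
    | 0, (j+1) =>
      exfalso
      rw [SimpleGraph.Walk.getVert_zero, SimpleGraph.Walk.getVert_cons_succ] at hij
      exact hq.2 (hij ▸ getVert_mem_support' _ j)
    | (i+1), 0 =>
      exfalso
      rw [SimpleGraph.Walk.getVert_zero, SimpleGraph.Walk.getVert_cons_succ] at hij
      exact hq.2 (hij ▸ getVert_mem_support' _ i)
    | (i+1), (j+1) =>
      rw [SimpleGraph.Walk.getVert_cons_succ, SimpleGraph.Walk.getVert_cons_succ] at hij
      simp only [SimpleGraph.Walk.length_cons] at hi hj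
      have := ih hq.1 i (by omega) j (by omega) hij
      omega

-- (1) transfer of walks from induced subgraphs
lemma walk_of_induce {s : Set V} {x y : {z // z ∈ s}} (p : (G.induce s).Walk x y) :
    ∃ q : G.Walk x.val y.val, ∀ z ∈ q.support, z ∈ s := by
  induction p with
  | nil => exact ⟨SimpleGraph.Walk.nil, by simp⟩
  | cons h q ih =>
    obtain ⟨q', hq'⟩ := ih
    refine ⟨SimpleGraph.Walk.cons ?_ q', ?_⟩
    · exact h
    · intro z hz
      change z ∈ _ :: q'.support at hz
      rcases List.mem_cons.mp hz with rfl | hz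
      · exact Subtype.coe_prop _
      · exact hq' z hz

-- (2) first-hit truncation
lemma exists_prefix_walk {x y : V} (p : G.Walk x y) (S : Set V) (hy : y ∈ S) :
    ∃ z, ∃ q : G.Walk x z, z ∈ S ∧ (∀ t ∈ q.support, t ∈ p.support) ∧
      (∀ t ∈ q.support, t ≠ z → t ∉ S) := by
  induction p with
  | nil =>
    rename_i a
    exact ⟨a, SimpleGraph.Walk.nil, hy, by simp, by simp⟩
  | cons h q ih =>
    rename_i a b c
    by_cases hx : a ∈ S
    · exact ⟨a, SimpleGraph.Walk.nil, hx, by simp, by simp⟩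
    · obtain ⟨z, q', hz, hsub, hmin⟩ := ih hy
      refine ⟨z, SimpleGraph.Walk.cons h q', hz, ?_, ?_⟩
      · intro t ht
        rw [SimpleGraph.Walk.support_cons] at ht ⊢
        rcases List.mem_cons.mp ht with rfl | ht
        · exact List.mem_cons_self
        · exact List.mem_cons_of_mem _ (hsub t ht)
      · intro t ht htz
        rw [SimpleGraph.Walk.support_cons] at ht
        rcases List.mem_cons.mp ht with rfl | ht
        · exact hx
        · exact hmin t ht htz

-- (3) parity
lemma walk_length_parity (C : G.Coloring (Fin 2)) {x y : V} (p : G.Walk x y) :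
    (C x = C y ↔ Even p.length) := by
  induction p with
  | nil => simp
  | cons h q ih =>
    rename_i a b c
    have hab : C a ≠ C b := C.valid h
    rw [SimpleGraph.Walk.length_cons]
    have key : ∀ pp qq rr : Fin 2, pp ≠ qq → (pp = rr ↔ ¬ (qq = rr)) := by decide
    rw [key _ _ _ hab, ih, Nat.even_add_one, not_iff_not]

-- (4) glue: v lies on P
lemma glue {u w v : V} (P Q : G.Walk u w) (hP : P.IsPath) (hQ : Q.IsPath)
    (hdisj : ∀ t, t ∈ P.support → t ∈ Q.support → t = u ∨ t = w)
    (hv : v ∈ P.support) (hvw : v ≠ w) :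
    ∃ (p q : G.Walk u v), p.IsPath ∧ q.IsPath ∧
      ∀ t, t ∈ p.support → t ∈ q.support → t = u ∨ t = v := by
  classical
  set p₁ := P.takeUntil v hv with hp₁def
  set dr := P.dropUntil v hv with hdrdef
  have hdec : P.support = p₁.support ++ dr.support.tail := by
    rw [← SimpleGraph.Walk.support_append, SimpleGraph.Walk.take_spec]
  have hnd : (p₁.support ++ dr.support.tail).Nodup := by
    rw [← hdec]; exact (SimpleGraph.Walk.isPath_def P).mp hP
  have hDisj12 := (List.nodup_append.mp hnd).2.2
  have hw_tail : w ∈ dr.support.tail := by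
    have hmem : w ∈ dr.support := SimpleGraph.Walk.end_mem_support dr
    rw [SimpleGraph.Walk.support_eq_cons dr] at hmem
    rcases List.mem_cons.mp hmem with h | h
    · exact absurd h.symm hvw
    · exact h
  have hwp₁ : w ∉ p₁.support := fun hw1 => hDisj12 w hw1 w hw_tail rfl
  refine ⟨p₁, (Q.append dr.reverse).bypass, hP.takeUntil hv,
    SimpleGraph.Walk.bypass_isPath _, ?_⟩
  intro t ht1 ht2
  have ht2' : t ∈ Q.support ∨ t ∈ dr.support := by
    have h1 := SimpleGraph.Walk.support_bypass_subset _ ht2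
    rw [SimpleGraph.Walk.support_append] at h1
    rcases List.mem_append.mp h1 with h | h
    · exact Or.inl h
    · right
      have h2 := List.mem_of_mem_tail h
      rw [SimpleGraph.Walk.support_reverse] at h2
      exact List.mem_reverse.mp h2
  rcases ht2' with hQt | hdrt
  · rcases hdisj t (SimpleGraph.Walk.support_takeUntil_subset _ hv ht1) hQt with rfl | rfl
    · exact Or.inl rfl
    · exact absurd ht1 hwp₁
  · rw [SimpleGraph.Walk.support_eq_cons dr] at hdrt
    rcases List.mem_cons.mp hdrt with rfl | htail
    · exact Or.inr rfl
    · exact absurd htail (fun hh => hDisj12 t ht1 t hh rfl)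

lemma length_drop' {u v : V} (p : G.Walk u v) (n : ℕ) : (p.drop n).length = p.length - n := by
  induction p generalizing n with
  | nil => cases n <;> simp [SimpleGraph.Walk.drop]
  | cons h q ih =>
    cases n with
    | zero => simp [SimpleGraph.Walk.drop]
    | succ m => simpa [SimpleGraph.Walk.drop] using ih m

-- (5) attach: v outside both paths, attached via R to z on P and via w
lemma attach {u w v z : V} (P Q : G.Walk u w) (hP : P.IsPath) (hQ : Q.IsPath)
    (hdisj : ∀ t, t ∈ P.support → t ∈ Q.support → t = u ∨ t = w)
    (hadj : G.Adj v w)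
    (R : G.Walk v z) (hR : R.IsPath) (hzP : z ∈ P.support) (hzu : z ≠ u) (hzw : z ≠ w)
    (hwR : w ∉ R.support)
    (hRmin : ∀ t ∈ R.support, t ≠ z → (t ∉ P.support ∧ t ∉ Q.support)) :
    ∃ (p q : G.Walk u v), p.IsPath ∧ q.IsPath ∧
      ∀ t, t ∈ p.support → t ∈ q.support → t = u ∨ t = v := by
  classical
  set p₁ := P.takeUntil z hzP with hp₁def
  set dr := P.dropUntil z hzP with hdrdef
  have hdec : P.support = p₁.support ++ dr.support.tail := by
    rw [← SimpleGraph.Walk.support_append, SimpleGraph.Walk.take_spec]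
  have hnd : (p₁.support ++ dr.support.tail).Nodup := by
    rw [← hdec]; exact (SimpleGraph.Walk.isPath_def P).mp hP
  have hDisj12 := (List.nodup_append.mp hnd).2.2
  have hw_tail : w ∈ dr.support.tail := by
    have hmem : w ∈ dr.support := SimpleGraph.Walk.end_mem_support dr
    rw [SimpleGraph.Walk.support_eq_cons dr] at hmem
    rcases List.mem_cons.mp hmem with h | h
    · exact absurd h.symm hzw
    · exact h
  have hwp₁ : w ∉ p₁.support := fun hw1 => hDisj12 w hw1 w hw_tail rfl
  refine ⟨(p₁.append R.reverse).bypass,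
    (Q.append (SimpleGraph.Walk.cons hadj.symm SimpleGraph.Walk.nil)).bypass,
    SimpleGraph.Walk.bypass_isPath _, SimpleGraph.Walk.bypass_isPath _, ?_⟩
  intro t ht1 ht2
  have ht1' : t ∈ p₁.support ∨ t ∈ R.support := by
    have h1 := SimpleGraph.Walk.support_bypass_subset _ ht1
    rw [SimpleGraph.Walk.support_append] at h1
    rcases List.mem_append.mp h1 with h | h
    · exact Or.inl h
    · right
      have h2 := List.mem_of_mem_tail h
      rw [SimpleGraph.Walk.support_reverse] at h2
      exact List.mem_reverse.mp h2
  have ht2' : t ∈ Q.support ∨ t = v := by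
    have h1 := SimpleGraph.Walk.support_bypass_subset _ ht2
    rw [SimpleGraph.Walk.support_append] at h1
    rcases List.mem_append.mp h1 with h | h
    · exact Or.inl h
    · right
      simp only [SimpleGraph.Walk.support_cons, SimpleGraph.Walk.support_nil,
        List.tail_cons] at h
      simpa using h
  rcases ht2' with hQt | rfl
  · rcases ht1' with hpt | hRt
    · rcases hdisj t (SimpleGraph.Walk.support_takeUntil_subset _ hzP hpt) hQt with rfl | rfl
      · exact Or.inl rfl
      · exact absurd hpt hwp₁
    · by_cases htz : t = z
      · subst htz
        rcases hdisj t hzP hQt with rfl | rfl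
        · exact absurd rfl hzu
        · exact absurd rfl hzw
      · exact absurd hQt (hRmin t hRt htz).2
  · exact Or.inr rfl

-- (6) two internally disjoint paths between any two distinct vertices
lemma whitney (hconn : G.Connected) (h2 : ∀ x : V, (G.induce {y | y ≠ x}).Connected) :
    ∀ n : ℕ, ∀ u v : V, u ≠ v → G.dist u v ≤ n →
    ∃ (p q : G.Walk u v), p.IsPath ∧ q.IsPath ∧
      ∀ t, t ∈ p.support → t ∈ q.support → t = u ∨ t = v := by
  intro n
  induction n with
  | zero =>
    intro u v hne hdist
    exfalso
    have h0 : G.dist u v = 0 := by omega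
    rw [SimpleGraph.Reachable.dist_eq_zero_iff (hconn.preconnected u v)] at h0
    exact hne h0
  | succ n ih =>
    intro u v hne hdist
    by_cases hd : G.dist u v ≤ n
    · exact ih u v hne hd
    have hdeq : G.dist u v = n + 1 := by omega
    by_cases hadj : G.Adj u v
    · refine ⟨SimpleGraph.Walk.cons hadj SimpleGraph.Walk.nil,
        SimpleGraph.Walk.cons hadj SimpleGraph.Walk.nil, ?_, ?_, ?_⟩
      · rw [SimpleGraph.Walk.cons_isPath_iff]
        exact ⟨SimpleGraph.Walk.IsPath.nil, by simp [hne]⟩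
      · rw [SimpleGraph.Walk.cons_isPath_iff]
        exact ⟨SimpleGraph.Walk.IsPath.nil, by simp [hne]⟩
      · intro t ht _
        simp only [SimpleGraph.Walk.support_cons, SimpleGraph.Walk.support_nil] at ht
        rcases List.mem_cons.mp ht with rfl | ht
        · exact Or.inl rfl
        · exact Or.inr (by simpa using ht)
    -- dist ≥ 2
    have hd2 : 2 ≤ G.dist u v := by
      rcases Nat.lt_or_ge (G.dist u v) 2 with h | h
      · interval_cases hh : G.dist u v
        · exact absurd (SimpleGraph.Reachable.dist_eq_zero_iff
            (hconn.preconnected u v) |>.mp hh) hne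
        · exact absurd (SimpleGraph.dist_eq_one_iff_adj.mp hh) hadj
      · exact h
    obtain ⟨sp, hsp⟩ := hconn.exists_walk_length_eq_dist u v
    set w : V := sp.reverse.getVert 1 with hwdef
    have hlenr : sp.reverse.length = n + 1 := by
      rw [SimpleGraph.Walk.length_reverse, hsp, hdeq]
    have hadjvw : G.Adj v w := by
      have := sp.reverse.adj_getVert_succ (i := 0) (by omega)
      rw [SimpleGraph.Walk.getVert_zero] at this
      exact this
    have hwv : w ≠ v := hadjvw.ne'
    have hwu : w ≠ u := by
      intro hwu
      rw [hwu] at hadjvw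
      exact hadj hadjvw.symm
    have hdistuw : G.dist u w ≤ n := by
      have hwalk := (sp.reverse.drop 1).reverse
      have hlen : (sp.reverse.drop 1).reverse.length = n := by
        rw [SimpleGraph.Walk.length_reverse, length_drop', hlenr]
        omega
      have := SimpleGraph.dist_le (sp.reverse.drop 1).reverse
      rw [hlen] at this
      exact this
    obtain ⟨P, Q, hP, hQ, hdisj⟩ := ih u w (Ne.symm hwu) hdistuw
    by_cases hvP : v ∈ P.support
    · exact glue P Q hP hQ hdisj hvP hwv.symm
    by_cases hvQ : v ∈ Q.support
    · obtain ⟨p, q, hp, hq, hpq⟩ :=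
        glue Q P hQ hP (fun t h1 h2 => hdisj t h2 h1) hvQ hwv.symm
      exact ⟨q, p, hq, hp, fun t h1 h2 => hpq t h2 h1⟩
    -- v outside both paths
    have hconn' := h2 w
    have hreach := hconn'.preconnected ⟨v, by simpa using hwv.symm⟩ ⟨u, by simpa using hwu.symm⟩
    obtain ⟨W₀⟩ := hreach
    obtain ⟨W, hW⟩ := walk_of_induce W₀
    have huS : u ∈ {t | t ∈ P.support ∨ t ∈ Q.support} :=
      Or.inl (SimpleGraph.Walk.start_mem_support P)
    obtain ⟨z, R₀, hz, hRsub, hRmin₀⟩ := exists_prefix_walk W _ huS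
    set R := R₀.bypass with hRdef
    have hRsup : ∀ t ∈ R.support, t ∈ R₀.support :=
      fun t ht => SimpleGraph.Walk.support_bypass_subset _ ht
    have hwR : w ∉ R.support := by
      intro hwmem
      have := hW w (hRsub w (hRsup w hwmem))
      simp at this
    have hRmin : ∀ t ∈ R.support, t ≠ z → (t ∉ P.support ∧ t ∉ Q.support) := by
      intro t ht htz
      have := hRmin₀ t (hRsup t ht) htz
      simp only [Set.mem_setOf_eq] at this
      push_neg at this
      exact this
    have hzw : z ≠ w := by
      intro hzw
      exact hwR (hzw ▸ SimpleGraph.Walk.end_mem_support R)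
    by_cases hzu : z = u
    · -- direct connection back to u
      refine ⟨(R.copy rfl hzu).reverse,
        (Q.append (SimpleGraph.Walk.cons hadjvw.symm SimpleGraph.Walk.nil)).bypass,
        (SimpleGraph.Walk.isPath_reverse_iff _).mpr
          ((SimpleGraph.Walk.isPath_copy _ rfl hzu).mpr (SimpleGraph.Walk.bypass_isPath R₀)),
        SimpleGraph.Walk.bypass_isPath _, ?_⟩
      intro t ht1 ht2
      have ht1' : t ∈ R.support := by
        rw [SimpleGraph.Walk.support_reverse, SimpleGraph.Walk.support_copy] at ht1
        exact List.mem_reverse.mp ht1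
      have ht2' : t ∈ Q.support ∨ t = v := by
        have h1 := SimpleGraph.Walk.support_bypass_subset _ ht2
        rw [SimpleGraph.Walk.support_append] at h1
        rcases List.mem_append.mp h1 with h | h
        · exact Or.inl h
        · right
          simp only [SimpleGraph.Walk.support_cons, SimpleGraph.Walk.support_nil,
            List.tail_cons] at h
          simpa using h
      rcases ht2' with hQt | rfl
      · by_cases htz : t = z
        · exact Or.inl (htz.trans hzu)
        · exact absurd hQt (hRmin t ht1' htz).2
      · exact Or.inr rfl
    · rcases hz with hzP | hzQ
      · exact attach P Q hP hQ hdisj hadjvw R (SimpleGraph.Walk.bypass_isPath _)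
          hzP hzu hzw hwR hRmin
      · obtain ⟨p, q, hp, hq, hpq⟩ := attach Q P hQ hP (fun t h1 h2 => hdisj t h2 h1)
          hadjvw R (SimpleGraph.Walk.bypass_isPath _) hzQ hzu hzw hwR
          (fun t ht htz => ⟨(hRmin t ht htz).2, (hRmin t ht htz).1⟩)
        exact ⟨p, q, hp, hq, hpq⟩


-- ===================== main theorem =====================

/-- Let `G` be a finite simple connected bipartite graph on at least 4
vertices that stays connected after deleting any single vertex, and let `u, v` be distinct
non-adjacent vertices in the same partite set (i.e. with the same color under a proper
2-coloring `C`). Then the graph obtained by adding the edge `uv` is not strongly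
EFX-orientable. -/
theorem not_stronglyEFXOrientable_bipartite_plus_edge [Fintype V] (G : SimpleGraph V)
    (hcard : 4 ≤ Fintype.card V) (hconn : G.Connected)
    (h2conn : ∀ x : V, (G.induce {y | y ≠ x}).Connected)
    (C : G.Coloring (Fin 2)) (u v : V) (huv : u ≠ v) (hnadj : ¬ G.Adj u v)
    (hsame : C u = C v) :
    ¬ StronglyEFXOrientable (G ⊔ SimpleGraph.fromEdgeSet {s(u, v)}) := by
  classical
  set H := G ⊔ SimpleGraph.fromEdgeSet {s(u, v)} with hHdef
  obtain ⟨p, q, hp, hq, hdisj⟩ :=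
    whitney hconn h2conn (G.dist u v) u v huv le_rfl
  -- lengths are even and at least 2
  have plen_pos : p.length ≠ 0 := by
    intro h0
    apply huv
    have := p.getVert_length
    rw [h0] at this
    rw [← this, SimpleGraph.Walk.getVert_zero]
  have plen_ne1 : p.length ≠ 1 := by
    intro h1
    apply hnadj
    have := p.adj_getVert_succ (i := 0) (by omega)
    rw [SimpleGraph.Walk.getVert_zero] at this
    have h2 : p.getVert 1 = v := by
      have := p.getVert_length
      rwa [h1] at this
    rwa [h2] at this
  have qlen_pos : q.length ≠ 0 := by
    intro h0
    apply huv
    have := q.getVert_length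
    rw [h0] at this
    rw [← this, SimpleGraph.Walk.getVert_zero]
  have qlen_ne1 : q.length ≠ 1 := by
    intro h1
    apply hnadj
    have := q.adj_getVert_succ (i := 0) (by omega)
    rw [SimpleGraph.Walk.getVert_zero] at this
    have h2 : q.getVert 1 = v := by
      have := q.getVert_length
      rwa [h1] at this
    rwa [h2] at this
  have hpeven : Even p.length := (walk_length_parity C p).mp hsame
  have hqeven : Even q.length := (walk_length_parity C q).mp hsame
  obtain ⟨r, hr2⟩ := hpeven
  obtain ⟨s, hs2⟩ := hqeven
  have hr2' : p.length = 2 * r := by omega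
  have hs2' : q.length = 2 * s := by omega
  have hr : 1 ≤ r := by omega
  have hs : 1 ≤ s := by omega
  -- the path functions
  set a : ℕ → V := fun i => p.reverse.getVert i with hadef
  set b : ℕ → V := fun j => q.getVert j with hbdef
  have hrevlen : p.reverse.length = 2 * r := by
    rw [SimpleGraph.Walk.length_reverse, hr2']
  have ha0 : a 0 = v := SimpleGraph.Walk.getVert_zero _
  have haE : a (2*r) = u := by
    have := p.reverse.getVert_length
    rwa [hrevlen] at this
  have hb0 : b 0 = u := SimpleGraph.Walk.getVert_zero _
  have hbE : b (2*s) = v := by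
    have := q.getVert_length
    rwa [hs2'] at this
  have hGH : ∀ {x y : V}, G.Adj x y → H.Adj x y := by
    intro x y h
    rw [hHdef, SimpleGraph.sup_adj]
    exact Or.inl h
  have hH : H.Adj u v := by
    rw [hHdef, SimpleGraph.sup_adj, SimpleGraph.fromEdgeSet_adj]
    exact Or.inr ⟨rfl, huv⟩
  have haAdj : ∀ i < 2*r, H.Adj (a i) (a (i+1)) := by
    intro i hi
    exact hGH (p.reverse.adj_getVert_succ (by rw [hrevlen]; omega))
  have hbAdj : ∀ j < 2*s, H.Adj (b j) (b (j+1)) := by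
    intro j hj
    exact hGH (q.adj_getVert_succ (by rw [hs2']; omega))
  have haInj : ∀ i ≤ 2*r, ∀ j ≤ 2*r, a i = a j → i = j := by
    intro i hi j hj hij
    exact IsPath.getVert_inj' ((SimpleGraph.Walk.isPath_reverse_iff p).mpr hp)
      i (by rw [hrevlen]; omega) j (by rw [hrevlen]; omega) hij
  have hbInj : ∀ i ≤ 2*s, ∀ j ≤ 2*s, b i = b j → i = j := by
    intro i hi j hj hij
    exact IsPath.getVert_inj' hq i (by rw [hs2']; omega) j (by rw [hs2']; omega) hij
  have hab : ∀ i, 0 < i → i < 2*r → ∀ j, 0 < j → j < 2*s → a i ≠ b j := by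
    intro i hi1 hi2 j hj1 hj2 heq
    have hmemp : a i ∈ p.support := by
      have := getVert_mem_support' p.reverse i
      rw [SimpleGraph.Walk.support_reverse] at this
      exact List.mem_reverse.mp this
    have hmemq : b j ∈ q.support := getVert_mem_support' q j
    rw [heq] at hmemp
    rcases hdisj _ hmemp hmemq with hu | hv
    · rw [← heq, ← haE] at hu
      have := haInj i (by omega) (2*r) (by omega) hu
      omega
    · rw [← heq, ← ha0] at hv
      have := haInj i (by omega) 0 (by omega) hv
      omega
  exact gadget huv hH hr hs ha0 haE hb0 hbE haAdj hbAdj haInj hbInj hab
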